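/- Let η ∈ L^∞(T), {a,b} nondegenerate, and f ∈ L^2(T). Write f_± = P^± f. Then η · S_{a,b} f = S_{a,b}(η f) if and only if η f_+ ∈ H^2 and η f_− ∈ conj(H^2_0); and this in turn is equivalent to η f_+ = P^+(η f), and also equivalent to η f_− = P^−(η f). -/

import Mathlib

open MeasureTheory Complex Real AddCircle
open scoped ENNReal ComplexConjugate

noncomputable section

instance : Fact (0 < 2 * π) := ⟨by positivity⟩

/-- Normalized Haar (Lebesgue) measure on the unit circle, realized as `AddCircle (2π)`. -/
abbrev μT : Measure (AddCircle (2 * π)) := AddCircle.haarAddCircle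

/-- The Lebesgue space `L²(𝕋)`. -/
abbrev L2 : Type := Lp ℂ 2 μT

/-- The space `L^∞(𝕋)`. -/
abbrev Linf : Type := Lp ℂ ∞ μT

/-- Multiplication of an `L²` function by an `L^∞` function, as an element of `L²`. -/
def mul2 (a : Linf) (f : L2) : L2 :=
  ((Lp.memLp f).smul (Lp.memLp a)).toLp ((a : AddCircle (2 * π) → ℂ) • (f : AddCircle (2 * π) → ℂ))

lemma mul2_coe (a : Linf) (f : L2) :
    (mul2 a f : AddCircle (2 * π) → ℂ) =ᵐ[μT] fun x => a x * f x :=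
  (MemLp.coeFn_toLp _)

/-- Multiplication in `L^∞`. -/
def mulInf (a b : Linf) : Linf :=
  ((Lp.memLp b).smul (Lp.memLp a)).toLp ((a : AddCircle (2 * π) → ℂ) • (b : AddCircle (2 * π) → ℂ))

lemma mulInf_coe (a b : Linf) :
    (mulInf a b : AddCircle (2 * π) → ℂ) =ᵐ[μT] fun x => a x * b x :=
  (MemLp.coeFn_toLp _)

/-- Complex conjugation on `Lp`. -/
def conjLp {p : ℝ≥0∞} [Fact (1 ≤ p)] (f : Lp ℂ p μT) : Lp ℂ p μT :=
  MemLp.toLp (fun x => conj (f x))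
    ⟨continuous_star.comp_aestronglyMeasurable (Lp.aestronglyMeasurable f),
      by
        rw [eLpNorm_congr_norm_ae (g := (f : AddCircle (2 * π) → ℂ))
          (Filter.Eventually.of_forall fun x => by simp)]
        exact (Lp.memLp f).2⟩

lemma conjLp_coe {p : ℝ≥0∞} [Fact (1 ≤ p)] (f : Lp ℂ p μT) :
    (conjLp f : AddCircle (2 * π) → ℂ) =ᵐ[μT] fun x => conj (f x) :=
  (MemLp.coeFn_toLp _)

/-- The Hardy space `H²`, as the subspace of `L²(𝕋)` of functions whose negative Fourier
coefficients vanish. -/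
def Hardy : Submodule ℂ L2 where
  carrier := {f | ∀ n : ℤ, n < 0 → fourierBasis.repr f n = 0}
  add_mem' := fun hf hg n hn => by simp [hf n hn, hg n hn]
  zero_mem' := fun n hn => by simp
  smul_mem' := fun c f hf n hn => by simp [hf n hn]

lemma hardy_isClosed : IsClosed (Hardy : Set L2) := by
  have h : (Hardy : Set L2)
      = ⋂ n : ℤ, ⋂ _ : n < 0, {f : L2 | fourierBasis.repr f n = 0} := by
    ext f
    simp [Hardy, Set.mem_iInter]
  rw [h]
  refine isClosed_iInter fun n => isClosed_iInter fun hn => ?_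
  have hc : Continuous fun f : L2 => fourierBasis.repr f n := by
    have : (fun f : L2 => fourierBasis.repr f n)
        = fun f : L2 => (innerSL ℂ (fourierBasis n : L2)) f := by
      ext f
      rw [HilbertBasis.repr_apply_apply]
      rfl
    rw [this]
    exact (innerSL ℂ (fourierBasis n : L2)).continuous
  exact isClosed_eq hc continuous_const

instance : CompleteSpace Hardy := hardy_isClosed.completeSpace_coe

/-- The Riesz projection `P⁺ : L² → L²`, i.e. the orthogonal projection onto `H²`. -/
def Pplus : L2 →L[ℂ] L2 := Hardy.subtypeL.comp Hardy.orthogonalProjectionOnto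

/-- The complementary projection `P⁻ = I - P⁺`. -/
def Pminus : L2 →L[ℂ] L2 := ContinuousLinearMap.id ℂ L2 - Pplus

lemma mul2_norm_le (a : Linf) (f : L2) : ‖mul2 a f‖ ≤ ‖a‖ * ‖f‖ := by
  rw [mul2, Lp.norm_toLp]
  have h := eLpNorm_smul_le_eLpNorm_top_mul_eLpNorm 2
    (Lp.aestronglyMeasurable f) (φ := (a : AddCircle (2 * π) → ℂ))
  refine le_trans (ENNReal.toReal_mono ?_ h) ?_
  · exact ENNReal.mul_ne_top (Lp.memLp a).2.ne (Lp.memLp f).2.ne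
  · rw [ENNReal.toReal_mul, Lp.norm_def, Lp.norm_def]

/-- Multiplication by an `L^∞` function `a`, as a bounded operator `M_a` on `L²`. -/
def Mult (a : Linf) : L2 →L[ℂ] L2 :=
  LinearMap.mkContinuous
    { toFun := mul2 a
      map_add' := fun f g => by
        refine Lp.ext ?_
        filter_upwards [mul2_coe a (f + g), mul2_coe a f, mul2_coe a g,
          Lp.coeFn_add f g, Lp.coeFn_add (mul2 a f) (mul2 a g)] with x h1 h2 h3 h4 h5
        simp only [h1, h5, Pi.add_apply, h2, h3, h4, mul_add]
      map_smul' := fun c f => by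
        refine Lp.ext ?_
        filter_upwards [mul2_coe a (c • f), mul2_coe a f,
          Lp.coeFn_smul c f, Lp.coeFn_smul c (mul2 a f)] with x h1 h2 h3 h4
        simp only [h1, h4, Pi.smul_apply, h2, h3, smul_eq_mul, RingHom.id_apply]
        ring }
    ‖a‖ (fun f => mul2_norm_le a f)

/-- The paired operator `S_{a,b} = a P⁺ + b P⁻` on `L²(𝕋)`. -/
def pairedS (a b : Linf) : L2 →L[ℂ] L2 :=
  (Mult a).comp Pplus + (Mult b).comp Pminus

/-- The transposed paired operator `Σ_{a,b} = P⁺ a + P⁻ b` on `L²(𝕋)`. -/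
def pairedSigma (a b : Linf) : L2 →L[ℂ] L2 :=
  Pplus.comp (Mult a) + Pminus.comp (Mult b)

/-- Membership in `H^∞`: an `L^∞` function whose negative Fourier coefficients vanish. -/
def MemHinf (a : Linf) : Prop := ∀ n : ℤ, n < 0 → fourierCoeff (a : AddCircle (2 * π) → ℂ) n = 0

/-- A pair `{a,b}` is nondegenerate if `a`, `b` and `a - b` are all nonzero a.e. on `𝕋`. -/
def Nondegenerate (a b : Linf) : Prop :=
  (∀ᵐ x ∂μT, a x ≠ 0) ∧ (∀ᵐ x ∂μT, b x ≠ 0) ∧ (∀ᵐ x ∂μT, a x - b x ≠ 0)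



lemma mult_apply (a : Linf) (f : L2) : Mult a f = mul2 a f := rfl

lemma mul2_comm (a c : Linf) (x : L2) : mul2 a (mul2 c x) = mul2 c (mul2 a x) := by
  refine Lp.ext ?_
  filter_upwards [mul2_coe a (mul2 c x), mul2_coe c (mul2 a x), mul2_coe c x,
    mul2_coe a x] with y h1 h2 h3 h4
  simp only [h1, h2, h3, h4]; ring

lemma mul2_cancel (a b : Linf) (hab : ∀ᵐ x ∂μT, a x - b x ≠ 0) (u : L2)
    (huv : mul2 a u = mul2 b u) : u = 0 := by
  refine Lp.ext ?_
  have h0 := Lp.ext_iff.mp huv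
  filter_upwards [mul2_coe a u, mul2_coe b u, h0, hab, Lp.coeFn_zero ℂ 2 μT]
    with x h1 h2 h3 h4 h5
  rw [h1, h2] at h3
  have : (a x - b x) * u x = 0 := by rw [sub_mul, h3, sub_self]
  rw [h5]
  exact (mul_eq_zero.mp this).resolve_left h4

lemma pplus_add_pminus (g : L2) : Pplus g + Pminus g = g := by
  simp [Pminus]

lemma mul2_split (η : Linf) (f : L2) :
    mul2 η (Pplus f) + mul2 η (Pminus f) = mul2 η f := by
  rw [← mult_apply, ← mult_apply, ← mult_apply, ← map_add, pplus_add_pminus]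

/-- For `η ∈ L^∞`, nondegenerate `{a,b}` and `f ∈ L²` with `f_± = P^± f`:
`η · S_{a,b} f = S_{a,b}(η f)` iff `η f₊ ∈ H²` and `η f₋ ∈ (H²)^⊥`; and this is also
equivalent to `η f₊ = P⁺(η f)`, and to `η f₋ = P⁻(η f)`. -/
theorem statement9 (η a b : Linf) (h : Nondegenerate a b) (f : L2) :
    ((mul2 η (pairedS a b f) = pairedS a b (mul2 η f))
        ↔ (mul2 η (Pplus f) ∈ Hardy ∧ mul2 η (Pminus f) ∈ Hardyᗮ))
    ∧ ((mul2 η (pairedS a b f) = pairedS a b (mul2 η f))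
        ↔ mul2 η (Pplus f) = Pplus (mul2 η f))
    ∧ ((mul2 η (pairedS a b f) = pairedS a b (mul2 η f))
        ↔ mul2 η (Pminus f) = Pminus (mul2 η f)) := by
  set g : L2 := mul2 η f with hg
  set p : L2 := mul2 η (Pplus f) with hp
  set q : L2 := mul2 η (Pminus f) with hq
  have hsplit : p + q = g := mul2_split η f
  have hqg : q = g - p := by rw [← hsplit]; abel
  have hPm : Pminus g = g - Pplus g := by simp [Pminus]
  -- rewrite both sides of the condition
  have hLHS : mul2 η (pairedS a b f) = mul2 a p + mul2 b q := by
    have h1 : pairedS a b f = mul2 a (Pplus f) + mul2 b (Pminus f) := by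
      simp [pairedS, mult_apply]
    rw [h1, ← mult_apply η, map_add, mult_apply, mult_apply, mul2_comm η a, mul2_comm η b]
  have hRHS : pairedS a b g = mul2 a (Pplus g) + mul2 b (Pminus g) := by
    simp [pairedS, mult_apply]
  -- the key equivalence
  have key : (mul2 η (pairedS a b f) = pairedS a b g) ↔ p = Pplus g := by
    constructor
    · intro hcond
      rw [hLHS, hRHS] at hcond
      have hu : mul2 a (p - Pplus g) = mul2 b (p - Pplus g) := by
        have h2 : Pminus g - q = p - Pplus g := by
          rw [hqg, hPm]; abel
        calc mul2 a (p - Pplus g) = mul2 a p - mul2 a (Pplus g) := by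
              rw [← mult_apply, ← mult_apply, ← mult_apply, map_sub]
          _ = mul2 b (Pminus g) - mul2 b q := by
              have : mul2 a p - mul2 a (Pplus g) = mul2 b (Pminus g) - mul2 b q := by
                have := hcond
                rw [add_comm (mul2 a (Pplus g)) (mul2 b (Pminus g))] at this
                linear_combination (norm := abel) this
              exact this
          _ = mul2 b (Pminus g - q) := by
              rw [← mult_apply b, ← mult_apply b, ← mult_apply b, map_sub]
          _ = mul2 b (p - Pplus g) := by rw [h2]
      have := mul2_cancel a b h.2.2 _ hu
      rwa [sub_eq_zero] at this
    · intro hpe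
      have hqe : q = Pminus g := by rw [hqg, hPm, hpe]
      rw [hLHS, hRHS, hpe, hqe]
  -- projection characterization
  have proj : (p = Pplus g) ↔ (p ∈ Hardy ∧ q ∈ Hardyᗮ) := by
    have hPg : Pplus g = ↑(Hardy.orthogonalProjectionOnto g) := rfl
    constructor
    · intro hpe
      refine ⟨by rw [hpe, hPg]; exact SetLike.coe_mem _, ?_⟩
      rw [hqg, hpe, hPg]
      exact Submodule.sub_starProjection_mem_orthogonal (K := Hardy) g
    · rintro ⟨h1, h2⟩
      rw [hqg] at h2
      exact (Submodule.eq_starProjection_of_mem_orthogonal h1 h2).symm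
  have pm : (p = Pplus g) ↔ (q = Pminus g) := by
    constructor
    · intro hpe; rw [hqg, hPm, hpe]
    · intro hqe
      have : p = g - q := by rw [← hsplit]; abel
      rw [this, hqe, hPm]; abel
  exact ⟨key.trans proj, key, key.trans pm⟩

end
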